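/- Let T be a smooth, symmetric, stationary (∂₀T^{αβ}=0) energy-momentum tensor on Minkowski space whose components, and the components of all its boosted versions, are integrable over Σ. Then the equality P^α[Σ, Λ·T] = Λ^α_β P^β[Σ, T] holds for every pure boost Λ (in every spatial direction x^k, k=1,2,3, and every velocity parameter β ∈ (−1,1)) if and only if the nine spatial integrals ∫_Σ T^{μm} d³x vanish for all μ ∈ {0,1,2,3} and all m ∈ {1,2,3}. -/

import Mathlib

open MeasureTheory

noncomputable section

/-- Embedding of the spacelike hyperplane `Σ = {x⁰ = 0}` into Minkowski space `ℝ⁴`. -/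
def emb (y : Fin 3 → ℝ) : Fin 4 → ℝ := Fin.cons 0 y

/-- Total four-momentum `P^α[Σ,T] := ∫_Σ T^{α0} d³x`. -/
def Pmom (T : (Fin 4 → ℝ) → Fin 4 → Fin 4 → ℝ) (α : Fin 4) : ℝ :=
  ∫ y : Fin 3 → ℝ, T (emb y) α 0

/-- Active Lorentz transformation of a (2,0)-tensor field:
`(Λ·T)^{αβ}(x) = Λ^α_γ Λ^β_δ T^{γδ}(Λ⁻¹x)`. -/
def actT (Λ : Matrix (Fin 4) (Fin 4) ℝ) (T : (Fin 4 → ℝ) → Fin 4 → Fin 4 → ℝ) :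
    (Fin 4 → ℝ) → Fin 4 → Fin 4 → ℝ :=
  fun x α β => ∑ γ : Fin 4, ∑ δ : Fin 4, Λ α γ * Λ β δ * T (Λ⁻¹.mulVec x) γ δ

/-- Lorentz factor `γ = 1/√(1−β²)`. -/
def gam (b : ℝ) : ℝ := 1 / Real.sqrt (1 - b ^ 2)

/-- Pure boost in the `x^k`-direction (`k` a spatial index) with velocity parameter `b`. -/
def boost (k : Fin 3) (b : ℝ) : Matrix (Fin 4) (Fin 4) ℝ :=
  Matrix.of fun i j =>
    if i = 0 ∧ j = 0 then gam b
    else if i = 0 ∧ j = k.succ then b * gam b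
    else if i = k.succ ∧ j = 0 then b * gam b
    else if i = k.succ ∧ j = k.succ then gam b
    else if i = j then 1 else 0

/-! ### Auxiliary lemmas -/

lemma stat_eq (T : (Fin 4 → ℝ) → Fin 4 → Fin 4 → ℝ)
    (hsmooth : ContDiff ℝ (⊤ : ℕ∞) T)
    (hstat : ∀ x α β, fderiv ℝ (fun z => T z α β) x (Pi.single 0 1) = 0)
    (x : Fin 4 → ℝ) (α β : Fin 4) :
    T x α β = T (emb (x ∘ Fin.succ)) α β := by
  have hdT : Differentiable ℝ fun z => T z α β := by
    have h1 : Differentiable ℝ T := hsmooth.differentiable (by simp)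
    exact differentiable_pi.mp (differentiable_pi.mp h1 α) β
  set e : Fin 4 → ℝ := Pi.single 0 1 with he
  have key : ∀ (w : Fin 4 → ℝ) (s t : ℝ), T (w + s • e) α β = T (w + t • e) α β := by
    intro w s t
    have hg : ∀ u : ℝ, HasDerivAt (fun r : ℝ => T (w + r • e) α β) 0 u := by
      intro u
      have hline : HasDerivAt (fun r : ℝ => w + r • e) e u := by
        simpa using ((hasDerivAt_id u).smul_const e).const_add w
      have := ((hdT (w + u • e)).hasFDerivAt).comp_hasDerivAt u hline
      have h0 : fderiv ℝ (fun z => T z α β) (w + u • e) e = 0 := hstat _ _ _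
      rw [h0] at this; exact this
    exact is_const_of_deriv_eq_zero (fun u => (hg u).differentiableAt)
      (fun u => (hg u).deriv) s t
  have hw1 : Function.update x 0 0 + (x 0) • e = x := by
    funext i
    refine Fin.cases ?_ (fun j => ?_) i <;>
      simp [he, Function.update, Pi.single, Fin.succ_ne_zero]
  have hw2 : Function.update x 0 0 + (0:ℝ) • e = emb (x ∘ Fin.succ) := by
    funext i
    refine Fin.cases ?_ (fun j => ?_) i <;>
      simp [he, emb, Function.update, Pi.single, Fin.succ_ne_zero]
  calc T x α β = T (Function.update x 0 0 + (x 0) • e) α β := by rw [hw1]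
    _ = T (Function.update x 0 0 + (0:ℝ) • e) α β := key _ _ _
    _ = T (emb (x ∘ Fin.succ)) α β := by rw [hw2]

lemma scale_integral (k : Fin 3) (c : ℝ) (hc : c ≠ 0) (f : (Fin 3 → ℝ) → ℝ)
    (hf : Continuous f) :
    ∫ y : Fin 3 → ℝ, f (Function.update y k (c * y k)) = |c|⁻¹ * ∫ y : Fin 3 → ℝ, f y := by
  set D : Matrix (Fin 3) (Fin 3) ℝ := Matrix.diagonal (fun i => if i = k then c else 1) with hD
  set L : (Fin 3 → ℝ) →ₗ[ℝ] (Fin 3 → ℝ) := Matrix.toLin' D with hL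
  have hLapp : ∀ y : Fin 3 → ℝ, L y = Function.update y k (c * y k) := by
    intro y
    funext i
    simp only [hL, Matrix.toLin'_apply, Matrix.mulVec, dotProduct, hD,
      Matrix.diagonal_apply, Function.update]
    rw [Finset.sum_eq_single i]
    · by_cases h : i = k <;> simp [h]
    · intro j _ hj; simp [hj.symm]
    · simp
  have hdet : LinearMap.det L = c := by
    rw [hL, LinearMap.det_toLin']
    rw [hD, Matrix.det_diagonal]
    rw [Fin.prod_univ_three]
    fin_cases k <;> simp
  have hmap : Measure.map L (volume : Measure (Fin 3 → ℝ)) =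
      ENNReal.ofReal |(LinearMap.det L)⁻¹| • volume := by
    exact Measure.map_linearMap_addHaar_pi_eq_smul_addHaar (by rw [hdet]; exact hc) _
  have hLc : Continuous L := LinearMap.continuous_of_finiteDimensional L
  have h1 : ∫ y, f (L y) = ∫ z, f z ∂(Measure.map L volume) := by
    rw [integral_map hLc.aemeasurable]
    rw [hmap]
    exact hf.aestronglyMeasurable.smul_measure _
  simp_rw [← hLapp]
  calc ∫ y, f (L y) = ∫ z, f z ∂(Measure.map L volume) := h1
    _ = |c|⁻¹ * ∫ y, f y := by
        rw [hmap, hdet, integral_smul_measure, ENNReal.toReal_ofReal (abs_nonneg _),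
          abs_inv, smul_eq_mul]

lemma gam_neg (b : ℝ) : gam (-b) = gam b := by simp [gam]

lemma gam_pos {b : ℝ} (hb : b ∈ Set.Ioo (-1:ℝ) 1) : 0 < gam b := by
  have h : (0:ℝ) < 1 - b ^ 2 := by nlinarith [hb.1, hb.2]
  rw [gam]
  positivity

lemma gam_sq {b : ℝ} (hb : b ∈ Set.Ioo (-1:ℝ) 1) : gam b * gam b * (1 - b ^ 2) = 1 := by
  have h : (0:ℝ) < 1 - b ^ 2 := by nlinarith [hb.1, hb.2]
  have : Real.sqrt (1 - b ^ 2) * Real.sqrt (1 - b ^ 2) = 1 - b ^ 2 :=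
    Real.mul_self_sqrt h.le
  have hs : Real.sqrt (1 - b ^ 2) ≠ 0 := by positivity
  rw [gam]
  field_simp
  rw [Real.sq_sqrt h.le]

lemma boost_mul_boost_neg {k : Fin 3} {b : ℝ} (hb : b ∈ Set.Ioo (-1:ℝ) 1) :
    boost k b * boost k (-b) = 1 := by
  have hg := gam_sq hb
  ext i j
  fin_cases k <;> fin_cases i <;> fin_cases j <;>
    simp (config := { decide := true }) [boost, Matrix.mul_apply, Fin.sum_univ_four, gam_neg,
      Matrix.one_apply] <;> nlinarith [hg]

lemma emb_eq (y : Fin 3 → ℝ) : emb y = ![0, y 0, y 1, y 2] := by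
  funext i; fin_cases i <;> rfl

lemma mulVec_emb (k : Fin 3) (c : ℝ) (y : Fin 3 → ℝ) :
    (boost k c).mulVec (emb y) ∘ Fin.succ = Function.update y k (gam c * y k) := by
  funext i
  fin_cases k <;> fin_cases i <;>
    simp (config := { decide := true }) [boost, Matrix.mulVec, dotProduct,
      Fin.sum_univ_four, emb_eq, Function.update, Matrix.vecHead, Matrix.vecTail] <;> ring

lemma boost_row0 (k : Fin 3) (b : ℝ) (f : Fin 4 → ℝ) :
    ∑ δ : Fin 4, boost k b 0 δ * f δ = gam b * f 0 + b * gam b * f k.succ := by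
  fin_cases k <;>
    simp (config := { decide := true }) [Fin.sum_univ_four, boost,
      show (0:Fin 3).succ = 1 from rfl, show (1:Fin 3).succ = 2 from rfl,
      show (2:Fin 3).succ = 3 from rfl]

lemma Pmom_actT (T : (Fin 4 → ℝ) → Fin 4 → Fin 4 → ℝ)
    (hsmooth : ContDiff ℝ (⊤ : ℕ∞) T)
    (hstat : ∀ x α β, fderiv ℝ (fun z => T z α β) x (Pi.single 0 1) = 0)
    (hInt : ∀ α β, Integrable fun y : Fin 3 → ℝ => T (emb y) α β)
    (k : Fin 3) (b : ℝ) (hb : b ∈ Set.Ioo (-1:ℝ) 1) (α : Fin 4) :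
    Pmom (actT (boost k b) T) α = ∑ γ : Fin 4, boost k b α γ *
      ((∫ y : Fin 3 → ℝ, T (emb y) γ 0) + b * ∫ y : Fin 3 → ℝ, T (emb y) γ k.succ) := by
  have hg0 : gam b ≠ 0 := (gam_pos hb).ne'
  have hinv : (boost k b)⁻¹ = boost k (-b) :=
    Matrix.inv_eq_right_inv (boost_mul_boost_neg hb)
  have hembc : Continuous emb := by
    refine continuous_pi fun i => ?_
    refine Fin.cases ?_ (fun j => ?_) i
    · simpa [emb] using (continuous_const : Continuous fun _ : Fin 3 → ℝ => (0:ℝ))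
    · simpa [emb] using continuous_apply j
  have hTc : Continuous T := hsmooth.continuous
  have hc : ∀ γ δ : Fin 4, Continuous fun z : Fin 3 → ℝ => T (emb z) γ δ := by
    intro γ δ
    exact (continuous_apply δ).comp ((continuous_apply γ).comp (hTc.comp hembc))
  set G : (Fin 3 → ℝ) → ℝ := fun z =>
    ∑ γ : Fin 4, ∑ δ : Fin 4, boost k b α γ * boost k b 0 δ * T (emb z) γ δ with hG
  have hGc : Continuous G :=
    continuous_finset_sum _ fun γ _ => continuous_finset_sum _ fun δ _ =>
      continuous_const.mul (hc γ δ)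
  have hpt : ∀ y : Fin 3 → ℝ,
      actT (boost k b) T (emb y) α 0 = G (Function.update y k (gam b * y k)) := by
    intro y
    simp only [actT, hG, hinv]
    refine Finset.sum_congr rfl fun γ _ => Finset.sum_congr rfl fun δ _ => ?_
    rw [stat_eq T hsmooth hstat ((boost k (-b)).mulVec (emb y)) γ δ, mulVec_emb, gam_neg]
  have hstep1 : Pmom (actT (boost k b) T) α =
      ∫ y : Fin 3 → ℝ, G (Function.update y k (gam b * y k)) := by
    rw [Pmom]; exact integral_congr_ae (Filter.Eventually.of_forall hpt)
  have hstep2 : (∫ y : Fin 3 → ℝ, G (Function.update y k (gam b * y k)))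
      = |gam b|⁻¹ * ∫ z, G z := scale_integral k (gam b) hg0 G hGc
  have hstep3 : (∫ z, G z) = ∑ γ : Fin 4, boost k b α γ *
      ∑ δ : Fin 4, boost k b 0 δ * (∫ y : Fin 3 → ℝ, T (emb y) γ δ) := by
    rw [hG, integral_finset_sum _ (fun γ _ =>
      integrable_finset_sum _ fun δ _ => (hInt γ δ).const_mul _)]
    refine Finset.sum_congr rfl fun γ _ => ?_
    rw [integral_finset_sum _ (fun δ _ => (hInt γ δ).const_mul _), Finset.mul_sum]
    refine Finset.sum_congr rfl fun δ _ => ?_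
    rw [integral_const_mul, mul_assoc]
  rw [hstep1, hstep2, hstep3]
  rw [abs_of_pos (gam_pos hb), Finset.mul_sum]
  refine Finset.sum_congr rfl fun γ _ => ?_
  rw [boost_row0 k b fun δ => ∫ y : Fin 3 → ℝ, T (emb y) γ δ]
  field_simp

/-- For a smooth, symmetric, stationary energy-momentum tensor on Minkowski
space whose components (and the components of all its boosted versions) are integrable over
`Σ`, the four-momentum transforms as a four-vector under all pure boosts if and only if the
nine spatial integrals `∫_Σ T^{μm} d³x` vanish. -/
theorem laue_boost_covariance_iff
    (T : (Fin 4 → ℝ) → Fin 4 → Fin 4 → ℝ)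
    (hsmooth : ContDiff ℝ (⊤ : ℕ∞) T)
    (hsym : ∀ x α β, T x α β = T x β α)
    (hstat : ∀ x α β, fderiv ℝ (fun z => T z α β) x (Pi.single 0 1) = 0)
    (hInt : ∀ α β, Integrable fun y : Fin 3 → ℝ => T (emb y) α β)
    (hIntBoost : ∀ (k : Fin 3) (b : ℝ), b ∈ Set.Ioo (-1 : ℝ) 1 → ∀ α β,
      Integrable fun y : Fin 3 → ℝ => actT (boost k b) T (emb y) α β) :
    (∀ (k : Fin 3) (b : ℝ), b ∈ Set.Ioo (-1 : ℝ) 1 → ∀ α : Fin 4,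
        Pmom (actT (boost k b) T) α = ∑ β : Fin 4, boost k b α β * Pmom T β)
      ↔ ∀ (μ : Fin 4) (m : Fin 3), ∫ y : Fin 3 → ℝ, T (emb y) μ m.succ = 0 := by
  constructor
  · intro h μ m
    have hb2 : (1/2 : ℝ) ∈ Set.Ioo (-1:ℝ) 1 := by norm_num
    have key : ∀ α : Fin 4,
        ∑ γ : Fin 4, boost m (1/2) α γ * ((1/2 : ℝ) * ∫ y : Fin 3 → ℝ, T (emb y) γ m.succ)
          = 0 := by
      intro α
      have h1 := h m (1/2) hb2 α
      rw [Pmom_actT T hsmooth hstat hInt m (1/2) hb2 α] at h1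
      have h2 : ∑ β : Fin 4, boost m (1/2) α β * Pmom T β
          = ∑ β : Fin 4, boost m (1/2) α β * ∫ y : Fin 3 → ℝ, T (emb y) β 0 := rfl
      rw [h2] at h1
      have := sub_eq_zero_of_eq h1
      rw [← Finset.sum_sub_distrib] at this
      calc ∑ γ : Fin 4, boost m (1/2) α γ * ((1/2 : ℝ) * ∫ y : Fin 3 → ℝ, T (emb y) γ m.succ)
          = ∑ γ : Fin 4, (boost m (1/2) α γ *
              ((∫ y : Fin 3 → ℝ, T (emb y) γ 0) + (1/2 : ℝ) * ∫ y : Fin 3 → ℝ, T (emb y) γ m.succ)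
            - boost m (1/2) α γ * ∫ y : Fin 3 → ℝ, T (emb y) γ 0) := by
            refine Finset.sum_congr rfl fun γ _ => ?_; ring
        _ = 0 := this
    set c : Fin 4 → ℝ := fun γ => (1/2 : ℝ) * ∫ y : Fin 3 → ℝ, T (emb y) γ m.succ with hcdef
    have hmv : (boost m (1/2)).mulVec c = 0 := by
      funext α
      simpa [hcdef, Matrix.mulVec, dotProduct] using key α
    have hone : boost m (-(1/2)) * boost m (1/2) = 1 := by
      have := boost_mul_boost_neg (k := m) (b := -(1/2 : ℝ)) (by norm_num)
      simpa using this
    have hc0 : c = 0 := by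
      calc c = (boost m (-(1/2)) * boost m (1/2)).mulVec c := by rw [hone, Matrix.one_mulVec]
        _ = (boost m (-(1/2))).mulVec ((boost m (1/2)).mulVec c) := by
            rw [Matrix.mulVec_mulVec]
        _ = 0 := by rw [hmv, Matrix.mulVec_zero]
    have := congrFun hc0 μ
    simp only [hcdef, Pi.zero_apply] at this
    linarith
  · intro h k b hb α
    rw [Pmom_actT T hsmooth hstat hInt k b hb α]
    refine Finset.sum_congr rfl fun γ _ => ?_
    rw [h γ k, Pmom]
    ring

end
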